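/- Inner limit inclusion (Theorem 3, part 1): Let 𝒬_s^(m) := {(T − I)/δ^(m) : T(x,y) = (s·A(x,y)+n_xy^(m))/(s+n_x^(m)), A ∈ int(𝕋)} and 𝒬_s := {Q : Q(x,y) = (s·A(x,y)+n_xy)/d_x off-diagonal, row sums zero, A ∈ 𝕋}. Assume for each pair x≠y that n_xy^(m) = n_xy for all sufficiently large m, and that δ^(m)·n_x^(m) → d_x > 0 where δ^(m) = t_max/m. Then every Q ∈ 𝒬_s is the limit of a sequence (Q_m) with Q_m ∈ 𝒬_s^(m); i.e., 𝒬_s ⊆ liminf_{m→∞} 𝒬_s^(m) (Painlevé–Kuratowski inner limit). -/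

import Mathlib

open Finset Filter

/-- Theorem 3, inner limit inclusion: every `Q ∈ 𝒬ₛ` is the limit
of a sequence `(Q_m)` with `Q_m ∈ 𝒬ₛ⁽ᵐ⁾` for all `m ≥ 1`, where
`𝒬ₛ⁽ᵐ⁾ = {(T−I)/δ⁽ᵐ⁾ : T(x,y) = (s·A(x,y)+n_xy⁽ᵐ⁾)/(s+n_x⁽ᵐ⁾), A ∈ int(𝕋)}`
and `𝒬ₛ = {Q_A : A ∈ 𝕋}`, assuming the off-diagonal counts `n_xy⁽ᵐ⁾` are
eventually equal to `n_xy` and `δ⁽ᵐ⁾·n_x⁽ᵐ⁾ → d_x > 0` with `δ⁽ᵐ⁾ = tmax/m`. -/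
theorem stmt_12 (S : Type*) [Fintype S] [DecidableEq S]
    (tmax : ℝ) (htmax : 0 < tmax) (s : ℝ) (hs : 0 ≤ s)
    (ndisc : ℕ → S → S → ℕ)
    (nrow : ℕ → S → ℕ) (hnrow : ∀ m x, nrow m x = ∑ y, ndisc m x y)
    (n : S → S → ℝ)
    (hn : ∀ x y, x ≠ y → ∀ᶠ m in atTop, (ndisc m x y : ℝ) = n x y)
    (d : S → ℝ) (hd : ∀ x, 0 < d x)
    (hdn : ∀ x, Tendsto (fun m : ℕ => (tmax / m) * (nrow m x : ℝ)) atTop (nhds (d x)))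
    (Qs : Set (Matrix S S ℝ))
    (hQs : Qs = {Q | ∃ A : Matrix S S ℝ,
      (∀ x y, 0 ≤ A x y) ∧ (∀ x, ∑ y, A x y = 1) ∧
      (∀ x y, Q x y =
        if x = y then -∑ z ∈ Finset.univ.erase x, (s * A x z + n x z) / d x
        else (s * A x y + n x y) / d x)})
    (Qsm : ℕ → Set (Matrix S S ℝ))
    (hQsm : ∀ m, Qsm m = {Q | ∃ A : Matrix S S ℝ,
      (∀ x y, 0 < A x y) ∧ (∀ x, ∑ y, A x y = 1) ∧
      (∀ x y, Q x y =
        ((s * A x y + (ndisc m x y : ℝ)) / (s + (nrow m x : ℝ))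
          - (if x = y then (1 : ℝ) else 0)) / (tmax / m))}) :
    ∀ Q ∈ Qs, ∃ Qseq : ℕ → Matrix S S ℝ,
      (∀ m : ℕ, 0 < m → Qseq m ∈ Qsm m) ∧
      Tendsto Qseq atTop (nhds Q) := by
  intro Q hQmem
  rcases isEmpty_or_nonempty S with hE | hNE
  · refine ⟨fun _ => Q, fun m hm => ?_, tendsto_const_nhds⟩
    rw [hQsm]
    exact ⟨fun _ _ => 1, fun x => isEmptyElim x, fun x => isEmptyElim x,
      fun x => isEmptyElim x⟩
  · rw [hQs] at hQmem
    obtain ⟨A, hA0, hA1, hQA⟩ := hQmem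
    have hk : (0:ℝ) < (Fintype.card S : ℝ) := by
      exact_mod_cast Fintype.card_pos
    set k : ℝ := (Fintype.card S : ℝ) with hkdef
    -- approximating stochastic matrices with positive entries
    set Am : ℕ → S → S → ℝ :=
      fun m x y => ((m:ℝ)/(m+1)) * A x y + (1/((m:ℝ)+1)) * (1/k) with hAmdef
    have hApos : ∀ m x y, 0 < Am m x y := by
      intro m x y
      have h1 : 0 ≤ ((m:ℝ)/(m+1)) * A x y := by
        apply mul_nonneg _ (hA0 x y); positivity
      have h2 : 0 < (1/((m:ℝ)+1)) * (1/k) := by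
        apply mul_pos (by positivity) (one_div_pos.mpr hk)
      simp only [hAmdef]; linarith
    have hAm1 : ∀ m x, ∑ y, Am m x y = 1 := by
      intro m x
      have hm1 : ((m:ℝ)+1) ≠ 0 := by positivity
      have hk' : k ≠ 0 := ne_of_gt hk
      simp only [hAmdef]
      rw [Finset.sum_add_distrib, ← Finset.mul_sum, hA1 x, Finset.sum_const,
        nsmul_eq_mul, Finset.card_univ, ← hkdef]
      field_simp
    have h1 : Tendsto (fun m : ℕ => 1/((m:ℝ)+1)) atTop (nhds 0) :=
      tendsto_one_div_add_atTop_nhds_zero_nat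
    have h2 : Tendsto (fun m : ℕ => (m:ℝ)/((m:ℝ)+1)) atTop (nhds 1) := by
      have h := (tendsto_const_nhds : Tendsto (fun _ : ℕ => (1:ℝ)) atTop (nhds 1)).sub h1
      rw [sub_zero] at h
      refine h.congr fun m => ?_
      have hm1 : ((m:ℝ)+1) ≠ 0 := by positivity
      field_simp
      ring
    have hAmt : ∀ x y, Tendsto (fun m => Am m x y) atTop (nhds (A x y)) := by
      intro x y
      have h := (h2.mul_const (A x y)).add (h1.mul_const (1/k))
      simp only [hAmdef]
      simpa [one_div] using h
    -- the sequence of generators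
    set Qm : ℕ → Matrix S S ℝ := fun m => Matrix.of fun x y =>
      ((s * Am m x y + (ndisc m x y : ℝ)) / (s + (nrow m x : ℝ))
        - (if x = y then (1 : ℝ) else 0)) / (tmax / m) with hQmdef
    have hδ : Tendsto (fun m : ℕ => tmax/(m:ℝ)) atTop (nhds 0) :=
      tendsto_const_nhds.div_atTop tendsto_natCast_atTop_atTop
    have hD : ∀ x, Tendsto (fun m : ℕ => (s + (nrow m x : ℝ)) * (tmax/(m:ℝ)))
        atTop (nhds (d x)) := by
      intro x
      have h := (hδ.const_mul s).add (hdn x)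
      simp only [mul_zero, zero_add] at h
      exact h.congr fun m => by ring
    have hev : ∀ x, ∀ᶠ m in atTop, (0:ℝ) < s + (nrow m x : ℝ) := by
      intro x
      have hhalf : d x / 2 < d x := half_lt_self (hd x)
      filter_upwards [(hdn x).eventually (eventually_gt_nhds hhalf)] with m hm
      have h0 : 0 ≤ tmax/(m:ℝ) := by positivity
      have hnr : (0:ℝ) < (nrow m x : ℝ) := by
        by_contra h
        push_neg at h
        have : tmax/(m:ℝ) * (nrow m x : ℝ) ≤ 0 := mul_nonpos_of_nonneg_of_nonpos h0 h
        linarith [half_pos (hd x)]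
      linarith
    have hoff : ∀ x y, x ≠ y →
        Tendsto (fun m => Qm m x y) atTop (nhds ((s * A x y + n x y) / d x)) := by
      intro x y hxy
      have hnum : Tendsto (fun m => s * Am m x y + (ndisc m x y : ℝ)) atTop
          (nhds (s * A x y + n x y)) := by
        have h := ((hAmt x y).const_mul s).add
          (tendsto_const_nhds : Tendsto (fun _ : ℕ => n x y) atTop (nhds (n x y)))
        refine h.congr' ?_
        filter_upwards [hn x y hxy] with m hm
        rw [hm]
      have h := hnum.div (hD x) (ne_of_gt (hd x))
      refine h.congr fun m => ?_
      simp only [Pi.div_apply, hQmdef, Matrix.of_apply, if_neg hxy, sub_zero, div_div]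
    have hdiag : ∀ x, Tendsto (fun m => Qm m x x) atTop (nhds (Q x x)) := by
      intro x
      have hsum : Tendsto (fun m => -∑ z ∈ Finset.univ.erase x, Qm m x z) atTop
          (nhds (-∑ z ∈ Finset.univ.erase x, (s * A x z + n x z) / d x)) := by
        exact (tendsto_finset_sum _ fun z hz =>
          hoff x z (Finset.ne_of_mem_erase hz).symm).neg
      rw [hQA x x, if_pos rfl]
      refine hsum.congr' ?_
      filter_upwards [hev x] with m hm
      have hDne : (s + (nrow m x : ℝ)) ≠ 0 := ne_of_gt hm
      have hNsum : s + (nrow m x : ℝ) = ∑ z, (s * Am m x z + (ndisc m x z : ℝ)) := by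
        rw [hnrow m x]
        push_cast
        rw [Finset.sum_add_distrib, ← Finset.mul_sum, hAm1 m x, mul_one]
      have hsplit : (∑ z ∈ Finset.univ.erase x, (s * Am m x z + (ndisc m x z : ℝ)))
          + (s * Am m x x + (ndisc m x x : ℝ))
          = ∑ z, (s * Am m x z + (ndisc m x z : ℝ)) :=
        Finset.sum_erase_add _ _ (Finset.mem_univ x)
      simp only [hQmdef, Matrix.of_apply, eq_self_iff_true, if_true]
      have hterm : ∀ z ∈ Finset.univ.erase x,
          ((s * Am m x z + (ndisc m x z : ℝ)) / (s + (nrow m x : ℝ))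
            - (if x = z then (1:ℝ) else 0)) / (tmax / m)
          = (s * Am m x z + (ndisc m x z : ℝ)) / (s + (nrow m x : ℝ)) / (tmax/m) := by
        intro z hz
        rw [if_neg (Finset.ne_of_mem_erase hz).symm, sub_zero]
      rw [Finset.sum_congr rfl hterm, ← Finset.sum_div, ← Finset.sum_div,
        ← neg_div, ← neg_div]
      congr 1
      have hrw : (s * Am m x x + (ndisc m x x : ℝ)) / (s + (nrow m x : ℝ)) - 1
          = (s * Am m x x + (ndisc m x x : ℝ) - (s + (nrow m x : ℝ)))
            / (s + (nrow m x : ℝ)) := by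
        rw [sub_div, div_self hDne]
      rw [hrw]
      congr 1
      linarith [hsplit, hNsum]
    refine ⟨Qm, fun m hm => ?_, ?_⟩
    · rw [hQsm m]
      exact ⟨Matrix.of (fun x y => Am m x y), fun x y => hApos m x y, hAm1 m,
        fun x y => rfl⟩
    · refine tendsto_pi_nhds.mpr fun x => tendsto_pi_nhds.mpr fun y => ?_
      by_cases hxy : x = y
      · subst hxy; exact hdiag x
      · have h := hoff x y hxy
        rw [hQA x y, if_neg hxy]
        exact h
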